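/- Uniform bound of the smoothed zero count by the number of critical points: Let ℓ > 0 and let V : ℝ → ℝ be continuously differentiable and ℓ-periodic. Assume the set of critical points {θ ∈ [0,ℓ) : V'(θ) = 0} is finite, of cardinality C. Then for every ε > 0, (1/(2ε)) ∫_0^ℓ 1_{[−ε,ε]}(V(θ)) · |V'(θ)| dθ ≤ 2·(2C + 3). -/

import Mathlib

open MeasureTheory

private lemma aux_integrable {V : ℝ → ℝ} (hV : ContDiff ℝ 1 V) (ε a b : ℝ) :
    IntervalIntegrable
      (fun θ => Set.indicator (Set.Icc (-ε) ε) (fun _ => (1 : ℝ)) (V θ) * |deriv V θ|)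
      volume a b := by
  have hd : Continuous (deriv V) := hV.continuous_deriv le_rfl
  have hg : IntervalIntegrable (fun θ => |deriv V θ|) volume a b :=
    hd.abs.intervalIntegrable a b
  refine hg.mono_fun ?_ ?_
  · apply Measurable.aestronglyMeasurable
    exact ((measurable_const.indicator measurableSet_Icc).comp hV.continuous.measurable).mul
      hd.abs.measurable
  · filter_upwards with x
    simp only [Real.norm_eq_abs, abs_abs, norm_mul]
    by_cases h : V x ∈ Set.Icc (-ε) ε
    · simp [Set.indicator_of_mem h]
    · simp [Set.indicator_of_notMem h, abs_nonneg]

private lemma piece_bound {V : ℝ → ℝ} (hV : ContDiff ℝ 1 V) {ε : ℝ} (hε : 0 < ε)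
    {a b : ℝ} (hab : a ≤ b) (hne : ∀ x ∈ Set.Ioo a b, deriv V x ≠ 0) :
    ∫ θ in a..b, Set.indicator (Set.Icc (-ε) ε) (fun _ => (1 : ℝ)) (V θ) * |deriv V θ|
      ≤ 2 * ε := by
  rcases eq_or_lt_of_le hab with rfl | hab'
  · simp; linarith
  have hcont : Continuous V := hV.continuous
  have hd : Continuous (deriv V) := hV.continuous_deriv le_rfl
  have hdiff : ∀ x : ℝ, HasDerivAt V (deriv V x) x := fun x =>
    ((hV.differentiable one_ne_zero) x).hasDerivAt
  -- the derivative has constant sign on `Ioo a b`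
  have hsign : (∀ x ∈ Set.Ioo a b, 0 < deriv V x) ∨ (∀ x ∈ Set.Ioo a b, deriv V x < 0) := by
    by_contra h
    push_neg at h
    obtain ⟨⟨x, hx, hx'⟩, ⟨y, hy, hy'⟩⟩ := h
    have hxneg : deriv V x < 0 := lt_of_le_of_ne hx' (hne x hx)
    have hypos : 0 < deriv V y := lt_of_le_of_ne hy' (Ne.symm (hne y hy))
    rcases le_total x y with hxy | hxy
    · have hsub : Set.Icc x y ⊆ Set.Ioo a b := Set.Icc_subset_Ioo hx.1 hy.2
      have h0 : (0 : ℝ) ∈ Set.Icc (deriv V x) (deriv V y) := ⟨hxneg.le, hypos.le⟩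
      obtain ⟨z, hz, hz0⟩ := intermediate_value_Icc hxy hd.continuousOn h0
      exact hne z (hsub hz) hz0
    · have hsub : Set.Icc y x ⊆ Set.Ioo a b := Set.Icc_subset_Ioo hy.1 hx.2
      have h0 : (0 : ℝ) ∈ Set.Icc (deriv V x) (deriv V y) := ⟨hxneg.le, hypos.le⟩
      obtain ⟨z, hz, hz0⟩ := intermediate_value_Icc' hxy hd.continuousOn h0
      exact hne z (hsub hz) hz0
  -- hence `V` is injective on `Ioo a b`
  have hinj : Set.InjOn V (Set.Ioo a b) := by
    rcases hsign with hpos | hneg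
    · exact (strictMonoOn_of_deriv_pos (convex_Ioo a b) hcont.continuousOn
        (by rwa [interior_Ioo])).injOn
    · exact (strictAntiOn_of_deriv_neg (convex_Ioo a b) hcont.continuousOn
        (by rwa [interior_Ioo])).injOn
  have hder : ∀ x ∈ Set.Ioo a b, HasDerivWithinAt V (deriv V x) (Set.Ioo a b) x :=
    fun x _ => (hdiff x).hasDerivWithinAt
  have key := integral_image_eq_integral_abs_deriv_smul measurableSet_Ioo hder hinj
    (Set.indicator (Set.Icc (-ε) ε) (fun _ => (1 : ℝ)))
  rw [intervalIntegral.integral_of_le hab, MeasureTheory.integral_Ioc_eq_integral_Ioo]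
  have heq : ∫ θ in Set.Ioo a b,
      Set.indicator (Set.Icc (-ε) ε) (fun _ => (1 : ℝ)) (V θ) * |deriv V θ|
      = ∫ x in V '' Set.Ioo a b,
          Set.indicator (Set.Icc (-ε) ε) (fun _ => (1 : ℝ)) x := by
    rw [key]
    simp only [smul_eq_mul, mul_comm]
  rw [heq, MeasureTheory.integral_indicator_const (1 : ℝ) measurableSet_Icc]
  rw [measureReal_def, Measure.restrict_apply measurableSet_Icc]
  have hle : volume (Set.Icc (-ε) ε ∩ V '' Set.Ioo a b) ≤ volume (Set.Icc (-ε) ε) :=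
    measure_mono Set.inter_subset_left
  have hvol : volume (Set.Icc (-ε) ε) = ENNReal.ofReal (2 * ε) := by
    rw [Real.volume_Icc]; ring_nf
  calc (volume (Set.Icc (-ε) ε ∩ V '' Set.Ioo a b)).toReal • (1 : ℝ)
      = (volume (Set.Icc (-ε) ε ∩ V '' Set.Ioo a b)).toReal := by simp
    _ ≤ (volume (Set.Icc (-ε) ε)).toReal := by
        apply ENNReal.toReal_mono _ hle
        rw [hvol]; exact ENNReal.ofReal_ne_top
    _ = 2 * ε := by rw [hvol, ENNReal.toReal_ofReal (by linarith)]

private lemma key_bound {V : ℝ → ℝ} (hV : ContDiff ℝ 1 V) {ε : ℝ} (hε : 0 < ε) :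
    ∀ n : ℕ, ∀ a b : ℝ, a ≤ b → {θ ∈ Set.Ioo a b | deriv V θ = 0}.Finite →
      {θ ∈ Set.Ioo a b | deriv V θ = 0}.ncard ≤ n →
      ∫ θ in a..b, Set.indicator (Set.Icc (-ε) ε) (fun _ => (1 : ℝ)) (V θ) * |deriv V θ|
        ≤ (n + 1) * (2 * ε) := by
  intro n
  induction n using Nat.strong_induction_on with
  | _ n IH =>
    intro a b hab hfin hcard
    by_cases hz : {θ ∈ Set.Ioo a b | deriv V θ = 0} = ∅
    · have hne : ∀ x ∈ Set.Ioo a b, deriv V x ≠ 0 := by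
        intro x hx hx0
        exact Set.eq_empty_iff_forall_notMem.mp hz x ⟨hx, hx0⟩
      have := piece_bound hV hε hab hne
      nlinarith [Nat.cast_nonneg (α := ℝ) n, hε]
    · obtain ⟨c, hcmem, hc0⟩ := Set.nonempty_iff_ne_empty.2 hz
      set S := {θ ∈ Set.Ioo a b | deriv V θ = 0} with hS
      set L := {θ ∈ Set.Ioo a c | deriv V θ = 0} with hL
      set R := {θ ∈ Set.Ioo c b | deriv V θ = 0} with hR
      have hLsub : L ⊆ S \ {c} := by
        rintro x ⟨hx, hx0⟩
        exact ⟨⟨⟨hx.1, hx.2.trans hcmem.2⟩, hx0⟩, by simp [ne_of_lt hx.2]⟩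
      have hRsub : R ⊆ S \ {c} := by
        rintro x ⟨hx, hx0⟩
        exact ⟨⟨⟨hcmem.1.trans hx.1, hx.2⟩, hx0⟩, by simp [(ne_of_gt hx.1)]⟩
      have hLfin : L.Finite := hfin.subset (hLsub.trans Set.diff_subset)
      have hRfin : R.Finite := hfin.subset (hRsub.trans Set.diff_subset)
      have hdisj : Disjoint L R := by
        apply Set.disjoint_left.mpr
        rintro x ⟨hx, _⟩ ⟨hx', _⟩
        exact absurd (hx.2.trans hx'.1) (lt_irrefl x)
      have hunion : (L ∪ R).ncard ≤ (S \ {c}).ncard :=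
        Set.ncard_le_ncard (Set.union_subset hLsub hRsub) (hfin.diff)
      have hcards : L.ncard + R.ncard = (L ∪ R).ncard :=
        (Set.ncard_union_eq hdisj hLfin hRfin).symm
      have hSc : (S \ {c}).ncard + 1 = S.ncard :=
        Set.ncard_diff_singleton_add_one ⟨hcmem, hc0⟩ hfin
      have hsum : L.ncard + R.ncard + 1 ≤ n := by omega
      have hac : a ≤ c := hcmem.1.le
      have hcb : c ≤ b := hcmem.2.le
      have hIL := IH L.ncard (by omega) a c hac hLfin le_rfl
      have hIR := IH R.ncard (by omega) c b hcb hRfin le_rfl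
      have hadd := intervalIntegral.integral_add_adjacent_intervals
        (aux_integrable hV ε a c) (aux_integrable hV ε c b)
      rw [← hadd]
      have hcast : ((L.ncard : ℝ) + 1) + ((R.ncard : ℝ) + 1) ≤ (n : ℝ) + 1 := by
        push_cast
        have : (L.ncard : ℝ) + R.ncard + 1 ≤ n := by exact_mod_cast hsum
        linarith
      nlinarith [hIL, hIR]

/-- Uniform bound of the smoothed zero count by the number of critical points. -/
theorem smoothed_zero_count_le_critical_points (ℓ : ℝ) (hℓ : 0 < ℓ) (V : ℝ → ℝ)
    (hV : ContDiff ℝ 1 V)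
    (hper : ∀ θ : ℝ, V (θ + ℓ) = V θ)
    (hfin : {θ ∈ Set.Ico (0 : ℝ) ℓ | deriv V θ = 0}.Finite)
    (C : ℕ) (hC : {θ ∈ Set.Ico (0 : ℝ) ℓ | deriv V θ = 0}.ncard = C) :
    ∀ ε > (0 : ℝ), (1 / (2 * ε)) * ∫ θ in (0 : ℝ)..ℓ,
        Set.indicator (Set.Icc (-ε) ε) (fun _ => (1 : ℝ)) (V θ) * |deriv V θ|
      ≤ 2 * (2 * C + 3) := by
  intro ε hε
  have hsub : {θ ∈ Set.Ioo (0 : ℝ) ℓ | deriv V θ = 0}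
      ⊆ {θ ∈ Set.Ico (0 : ℝ) ℓ | deriv V θ = 0} := by
    rintro x ⟨hx, hx0⟩
    exact ⟨⟨hx.1.le, hx.2⟩, hx0⟩
  have hfin' : {θ ∈ Set.Ioo (0 : ℝ) ℓ | deriv V θ = 0}.Finite := hfin.subset hsub
  have hcard : {θ ∈ Set.Ioo (0 : ℝ) ℓ | deriv V θ = 0}.ncard ≤ C := by
    rw [← hC]; exact Set.ncard_le_ncard hsub hfin
  have hI := key_bound hV hε C 0 ℓ hℓ.le hfin' hcard
  have h2ε : (0 : ℝ) < 2 * ε := by linarith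
  have := mul_le_mul_of_nonneg_left hI (le_of_lt (by positivity : (0:ℝ) < 1 / (2 * ε)))
  calc (1 / (2 * ε)) * ∫ θ in (0 : ℝ)..ℓ,
        Set.indicator (Set.Icc (-ε) ε) (fun _ => (1 : ℝ)) (V θ) * |deriv V θ|
      ≤ (1 / (2 * ε)) * (((C : ℝ) + 1) * (2 * ε)) := this
    _ = (C : ℝ) + 1 := by field_simp
    _ ≤ 2 * (2 * C + 3) := by push_cast; linarith
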